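/- If (p,q) and (p',q') are pairs of positive integers with q - p ≠ q' - p', then φ^{(p,q)} and φ^{(p',q')} are orthogonal in L²(D, dxdy/(1-x²-y²)), i.e., ∫_D φ^{(p,q)} conj(φ^{(p',q')}) (1-x²-y²)^{-1} dxdy = 0, and moreover this integral is absolutely convergent. -/

import Mathlib

open MeasureTheory Complex

/-- Wirtinger derivative ∂/∂z = (∂ₓ - i∂ᵧ)/2 -/
noncomputable def wdz (f : ℂ → ℂ) (z : ℂ) : ℂ :=
  (fderiv ℝ f z 1 - Complex.I * fderiv ℝ f z Complex.I) / 2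

/-- Wirtinger derivative ∂/∂z̄ = (∂ₓ + i∂ᵧ)/2 -/
noncomputable def wdzbar (f : ℂ → ℂ) (z : ℂ) : ℂ :=
  (fderiv ℝ f z 1 + Complex.I * fderiv ℝ f z Complex.I) / 2

noncomputable def mulCLE (a : ℂˣ) : ℂ ≃L[ℝ] ℂ :=
  ((ContinuousLinearEquiv.unitsEquivAut ℂ a).toLinearEquiv.restrictScalars ℝ).toContinuousLinearEquiv

lemma mulCLE_apply (a : ℂˣ) (z : ℂ) : mulCLE a z = (a : ℂ) * z := by
  simp [mulCLE, ContinuousLinearEquiv.unitsEquivAut_apply, mul_comm]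

lemma fderiv_comp_mul (f : ℂ → ℂ) (a : ℂˣ) (z v : ℂ) :
    fderiv ℝ (fun w => f ((a : ℂ) * w)) z v = fderiv ℝ f ((a : ℂ) * z) ((a : ℂ) * v) := by
  have h := (mulCLE a).comp_right_fderiv (f := f) (x := z)
  have he : (f ∘ (mulCLE a)) = fun w => f ((a : ℂ) * w) := by
    funext w; simp [Function.comp, mulCLE_apply]
  rw [he] at h
  rw [h]
  simp [mulCLE_apply]

lemma fderiv_wirtinger (f : ℂ → ℂ) (z v : ℂ) :
    fderiv ℝ f z v = wdz f z * v + wdzbar f z * (starRingEnd ℂ) v := by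
  obtain ⟨r, s, rfl⟩ : ∃ r s : ℝ, v = (r : ℂ) + (s : ℂ) * Complex.I :=
    ⟨v.re, v.im, by simp [Complex.ext_iff]⟩
  have hD : fderiv ℝ f z ((r : ℂ) + (s : ℂ) * Complex.I)
      = r • fderiv ℝ f z 1 + s • fderiv ℝ f z Complex.I := by
    rw [show ((r : ℂ) + (s : ℂ) * Complex.I) = r • (1 : ℂ) + s • Complex.I by
      simp [Complex.real_smul]]
    rw [map_add, ContinuousLinearMap.map_smul, ContinuousLinearMap.map_smul]
  rw [hD]
  have hconj : (starRingEnd ℂ) ((r : ℂ) + (s : ℂ) * Complex.I) = (r : ℂ) - (s : ℂ) * Complex.I := by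
    simp [Complex.ext_iff]
  rw [hconj]
  simp only [wdz, wdzbar, Complex.real_smul]
  set x := fderiv ℝ f z 1
  set y := fderiv ℝ f z Complex.I
  have hI : Complex.I * Complex.I = -1 := Complex.I_mul_I
  linear_combination ((s : ℂ) * y) * hI

lemma wdz_comp_mul (f : ℂ → ℂ) (a : ℂˣ) (z : ℂ) :
    wdz (fun w => f ((a : ℂ) * w)) z = (a : ℂ) * wdz f ((a : ℂ) * z) := by
  show (fderiv ℝ (fun w => f ((a:ℂ)*w)) z 1 - Complex.I * fderiv ℝ (fun w => f ((a:ℂ)*w)) z Complex.I)/2 = _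
  rw [fderiv_comp_mul, fderiv_comp_mul, fderiv_wirtinger, fderiv_wirtinger]
  set α := wdz f ((a:ℂ)*z)
  set β := wdzbar f ((a:ℂ)*z)
  simp only [map_mul, Complex.conj_I, mul_one, map_one]
  have hI : Complex.I * Complex.I = -1 := Complex.I_mul_I
  linear_combination ((β * (starRingEnd ℂ) (a:ℂ) - α * (a:ℂ))/2) * hI

lemma wdzbar_comp_mul (f : ℂ → ℂ) (a : ℂˣ) (z : ℂ) :
    wdzbar (fun w => f ((a : ℂ) * w)) z = (starRingEnd ℂ) (a : ℂ) * wdzbar f ((a : ℂ) * z) := by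
  show (fderiv ℝ (fun w => f ((a:ℂ)*w)) z 1 + Complex.I * fderiv ℝ (fun w => f ((a:ℂ)*w)) z Complex.I)/2 = _
  rw [fderiv_comp_mul, fderiv_comp_mul, fderiv_wirtinger, fderiv_wirtinger]
  set α := wdz f ((a:ℂ)*z)
  set β := wdzbar f ((a:ℂ)*z)
  simp only [map_mul, Complex.conj_I, mul_one, map_one]
  have hI : Complex.I * Complex.I = -1 := Complex.I_mul_I
  linear_combination ((α * (a:ℂ) - β * (starRingEnd ℂ) (a:ℂ))/2) * hI

lemma fderiv_const_mul' (f : ℂ → ℂ) (c : ℂˣ) (z v : ℂ) :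
    fderiv ℝ (fun w => (c : ℂ) * f w) z v = (c : ℂ) * fderiv ℝ f z v := by
  have h := (mulCLE c).comp_fderiv (f := f) (x := z)
  have he : ((mulCLE c) ∘ f) = fun w => (c : ℂ) * f w := by
    funext w; simp [Function.comp, mulCLE_apply]
  rw [he] at h
  rw [h]
  simp [mulCLE_apply]

lemma wdz_const_mul (f : ℂ → ℂ) (c : ℂˣ) (z : ℂ) :
    wdz (fun w => (c : ℂ) * f w) z = (c : ℂ) * wdz f z := by
  simp only [wdz, fderiv_const_mul']
  ring

lemma wdzbar_const_mul (f : ℂ → ℂ) (c : ℂˣ) (z : ℂ) :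
    wdzbar (fun w => (c : ℂ) * f w) z = (c : ℂ) * wdzbar f z := by
  simp only [wdzbar, fderiv_const_mul']
  ring

lemma wdz_iter_const_mul (f : ℂ → ℂ) (c : ℂˣ) (p : ℕ) :
    wdz^[p] (fun w => (c : ℂ) * f w) = fun z => (c : ℂ) * wdz^[p] f z := by
  induction p with
  | zero => rfl
  | succ n ih =>
    rw [Function.iterate_succ_apply', Function.iterate_succ_apply', ih]
    funext z; exact wdz_const_mul _ c z

lemma wdzbar_iter_const_mul (f : ℂ → ℂ) (c : ℂˣ) (p : ℕ) :
    wdzbar^[p] (fun w => (c : ℂ) * f w) = fun z => (c : ℂ) * wdzbar^[p] f z := by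
  induction p with
  | zero => rfl
  | succ n ih =>
    rw [Function.iterate_succ_apply', Function.iterate_succ_apply', ih]
    funext z; exact wdzbar_const_mul _ c z

lemma wdzbar_iter_comp_mul (f : ℂ → ℂ) (a : ℂˣ) (q : ℕ) :
    wdzbar^[q] (fun w => f ((a : ℂ) * w))
      = fun z => ((starRingEnd ℂ) (a : ℂ))^q * wdzbar^[q] f ((a : ℂ) * z) := by
  induction q with
  | zero => funext z; simp
  | succ n ih =>
    rw [Function.iterate_succ_apply', ih]
    funext z
    have hu : ((starRingEnd ℂ) (a : ℂ))^n ≠ 0 := by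
      apply pow_ne_zero; simp [a.ne_zero]
    have h1 := wdzbar_const_mul (fun z => wdzbar^[n] f ((a:ℂ) * z)) (Units.mk0 _ hu) z
    simp only [Units.val_mk0] at h1
    rw [h1, wdzbar_comp_mul (wdzbar^[n] f) a z, ← Function.iterate_succ_apply' wdzbar n f]
    ring

lemma wdz_iter_comp_mul (f : ℂ → ℂ) (a : ℂˣ) (p : ℕ) :
    wdz^[p] (fun w => f ((a : ℂ) * w))
      = fun z => ((a : ℂ))^p * wdz^[p] f ((a : ℂ) * z) := by
  induction p with
  | zero => funext z; simp
  | succ n ih =>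
    rw [Function.iterate_succ_apply', ih]
    funext z
    have hu : ((a : ℂ))^n ≠ 0 := pow_ne_zero _ a.ne_zero
    have h1 := wdz_const_mul (fun z => wdz^[n] f ((a:ℂ) * z)) (Units.mk0 _ hu) z
    simp only [Units.val_mk0] at h1
    rw [h1, wdz_comp_mul (wdz^[n] f) a z, ← Function.iterate_succ_apply' wdz n f]
    ring

/-- Scattering polynomial φ^{(p,q)} given by the Rodrigues-type formula
    φ^{(p,q)}(z) = ((-1)^p / (q (p+q-1)!)) (1 - z z̄) ∂^{p+q}/∂z^p ∂z̄^q (1 - z z̄)^{p+q-1}. -/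
noncomputable def scatter (p q : ℕ) : ℂ → ℂ := fun z =>
  ((-1 : ℂ) ^ p / (q * Nat.factorial (p + q - 1))) * (1 - z * (starRingEnd ℂ) z) *
    (wdz^[p] (wdzbar^[q] (fun w => (1 - w * (starRingEnd ℂ) w) ^ (p + q - 1))) z)
lemma scatter_rot (p q : ℕ) (a : ℂˣ) (ha : (a : ℂ) * (starRingEnd ℂ) (a : ℂ) = 1) (z : ℂ) :
    scatter p q ((a : ℂ) * z)
      = ((starRingEnd ℂ) (a : ℂ))^p * (a : ℂ)^q * scatter p q z := by
  set n := p + q - 1 with hn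
  set g : ℂ → ℂ := fun w => (1 - w * (starRingEnd ℂ) w) ^ n with hg
  have hbase : ∀ w : ℂ, (1 - ((a:ℂ) * w) * (starRingEnd ℂ) ((a:ℂ) * w)) = 1 - w * (starRingEnd ℂ) w := by
    intro w
    simp only [map_mul]
    linear_combination (-(w * (starRingEnd ℂ) w)) * ha
  have h1 : (fun w => g ((a:ℂ) * w)) = g := by
    funext w; simp only [hg]; rw [hbase]
  set G : ℂ → ℂ := wdzbar^[q] g with hG
  have h2 : G = fun z => ((starRingEnd ℂ) (a:ℂ))^q * G ((a:ℂ) * z) := by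
    conv_lhs => rw [hG, ← h1, wdzbar_iter_comp_mul g a q]
  have h2' : ∀ w : ℂ, G ((a:ℂ) * w) = (a:ℂ)^q * G w := by
    intro w
    have := congrFun h2 w
    rw [this]
    rw [← mul_assoc, ← mul_pow, mul_pow ((a:ℂ)) _, ← mul_pow]
    rw [ha, one_pow, one_mul]
  set H : ℂ → ℂ := wdz^[p] G with hH
  have h3 : (fun w => G ((a:ℂ) * w)) = fun w => (a:ℂ)^q * G w := funext h2'
  have h4 : wdz^[p] (fun w => G ((a:ℂ) * w)) = fun z => (a:ℂ)^p * H ((a:ℂ) * z) :=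
    wdz_iter_comp_mul G a p
  have hu : ((a:ℂ))^q ≠ 0 := pow_ne_zero _ a.ne_zero
  have h5 : wdz^[p] (fun w => (a:ℂ)^q * G w) = fun z => (a:ℂ)^q * H z := by
    have := wdz_iter_const_mul G (Units.mk0 _ hu) p
    simpa using this
  rw [h3, h5] at h4
  have h6 : H ((a:ℂ) * z) = ((starRingEnd ℂ) (a:ℂ))^p * (a:ℂ)^q * H z := by
    have h4z := congrFun h4 z
    -- (a)^q * H z = (a)^p * H (a z)
    have hc : ((starRingEnd ℂ) (a:ℂ))^p * (a:ℂ)^p = 1 := by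
      rw [← mul_pow, mul_comm, ha, one_pow]
    calc H ((a:ℂ) * z) = ((starRingEnd ℂ) (a:ℂ))^p * (a:ℂ)^p * H ((a:ℂ)*z) := by rw [hc, one_mul]
    _ = ((starRingEnd ℂ) (a:ℂ))^p * ((a:ℂ)^p * H ((a:ℂ)*z)) := by ring
    _ = ((starRingEnd ℂ) (a:ℂ))^p * ((a:ℂ)^q * H z) := by rw [← h4z]
    _ = ((starRingEnd ℂ) (a:ℂ))^p * (a:ℂ)^q * H z := by ring
  show ((-1 : ℂ) ^ p / (q * Nat.factorial (p + q - 1))) * (1 - ((a:ℂ)*z) * (starRingEnd ℂ) ((a:ℂ)*z)) * H ((a:ℂ)*z) = _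
  rw [hbase, h6]
  show _ = ((starRingEnd ℂ) (a:ℂ))^p * (a:ℂ)^q *
    (((-1 : ℂ) ^ p / (q * Nat.factorial (p + q - 1))) * (1 - z * (starRingEnd ℂ) z) * H z)
  ring

open MvPolynomial in
noncomputable def evalBi (P : MvPolynomial (Fin 2) ℂ) (z : ℂ) : ℂ :=
  MvPolynomial.eval ![z, (starRingEnd ℂ) z] P

noncomputable def dLin (A B : ℂ) : ℂ →L[ℝ] ℂ :=
  A • (ContinuousLinearMap.id ℝ ℂ) + B • (Complex.conjCLE.toContinuousLinearMap)

lemma dLin_apply (A B v : ℂ) : dLin A B v = A * v + B * (starRingEnd ℂ) v := by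
  simp only [dLin, ContinuousLinearMap.add_apply, ContinuousLinearMap.smul_apply,
    ContinuousLinearMap.coe_id', id_eq, smul_eq_mul]
  rfl

open MvPolynomial in
lemma hasFDerivAt_evalBi (P : MvPolynomial (Fin 2) ℂ) (z : ℂ) :
    HasFDerivAt (fun w => evalBi P w)
      (dLin (evalBi (pderiv 0 P) z) (evalBi (pderiv 1 P) z)) z := by
  induction P using MvPolynomial.induction_on with
  | C a =>
    have : (fun w => evalBi (C a) w) = fun _ => a := by
      funext w; simp [evalBi]
    rw [this]
    have hd : dLin (evalBi (pderiv 0 (C a)) z) (evalBi (pderiv 1 (C a)) z) = 0 := by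
      ext v
      simp [dLin_apply, evalBi]
    rw [hd]
    exact hasFDerivAt_const a z
  | add P Q ihP ihQ =>
    have : (fun w => evalBi (P + Q) w) = fun w => evalBi P w + evalBi Q w := by
      funext w; simp [evalBi]
    rw [this]
    have := ihP.add ihQ
    refine this.congr_fderiv ?_
    simp only [map_add]
    ext v
    simp only [ContinuousLinearMap.add_apply, dLin_apply, evalBi, map_add]
    ring
  | mul_X P i ih =>
    have hi : i = 0 ∨ i = 1 := by
      fin_cases i
      · exact Or.inl rfl
      · exact Or.inr rfl
    rcases hi with rfl | rfl
    · have : (fun w => evalBi (P * X 0) w) = fun w => evalBi P w * w := by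
        funext w; simp [evalBi]
      rw [this]
      have hid : HasFDerivAt (fun w : ℂ => w) (ContinuousLinearMap.id ℝ ℂ) z := hasFDerivAt_id z
      have := ih.mul hid
      refine this.congr_fderiv ?_
      ext v
      simp only [dLin_apply, ContinuousLinearMap.add_apply, ContinuousLinearMap.smul_apply,
        ContinuousLinearMap.coe_id', id_eq, smul_eq_mul]
      simp only [evalBi, pderiv_mul, pderiv_X_self, pderiv_X_of_ne (by decide : (0:Fin 2) ≠ 1),
        map_add, map_mul, eval_X, mul_one, mul_zero, add_zero, Matrix.cons_val_zero,
        pderiv_X_of_ne (by decide : (1:Fin 2) ≠ 0)]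
      ring
    · have : (fun w => evalBi (P * X 1) w) = fun w => evalBi P w * (starRingEnd ℂ) w := by
        funext w; simp [evalBi]
      rw [this]
      have hconj : HasFDerivAt (fun w : ℂ => (starRingEnd ℂ) w)
          (Complex.conjCLE.toContinuousLinearMap) z := Complex.conjCLE.hasFDerivAt
      have := ih.mul hconj
      refine this.congr_fderiv ?_
      ext v
      simp only [dLin_apply, ContinuousLinearMap.add_apply, ContinuousLinearMap.smul_apply,
        smul_eq_mul]
      simp only [evalBi, pderiv_mul, pderiv_X_self, pderiv_X_of_ne (by decide : (0:Fin 2) ≠ 1),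
        map_add, map_mul, eval_X, mul_one, mul_zero, add_zero, Matrix.cons_val_one, Matrix.head_cons, Matrix.cons_val_zero,
        pderiv_X_of_ne (by decide : (1:Fin 2) ≠ 0)]
      have : (Complex.conjCLE.toContinuousLinearMap : ℂ →L[ℝ] ℂ) v = (starRingEnd ℂ) v := rfl
      rw [this]
      ring

open MvPolynomial in
lemma wdz_evalBi (P : MvPolynomial (Fin 2) ℂ) (z : ℂ) :
    wdz (evalBi P) z = evalBi (pderiv 0 P) z := by
  have hf : fderiv ℝ (evalBi P) z = dLin (evalBi (pderiv 0 P) z) (evalBi (pderiv 1 P) z) :=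
    (hasFDerivAt_evalBi P z).fderiv
  simp only [wdz, hf, dLin_apply, map_one, Complex.conj_I, mul_one]
  have hI : Complex.I * Complex.I = -1 := Complex.I_mul_I
  linear_combination ((evalBi (pderiv 1 P) z - evalBi (pderiv 0 P) z)/2) * hI

open MvPolynomial in
lemma wdzbar_evalBi (P : MvPolynomial (Fin 2) ℂ) (z : ℂ) :
    wdzbar (evalBi P) z = evalBi (pderiv 1 P) z := by
  have hf : fderiv ℝ (evalBi P) z = dLin (evalBi (pderiv 0 P) z) (evalBi (pderiv 1 P) z) :=
    (hasFDerivAt_evalBi P z).fderiv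
  simp only [wdzbar, hf, dLin_apply, map_one, Complex.conj_I, mul_one]
  have hI : Complex.I * Complex.I = -1 := Complex.I_mul_I
  linear_combination ((evalBi (pderiv 0 P) z - evalBi (pderiv 1 P) z)/2) * hI

open MvPolynomial in
lemma wdz_iter_evalBi (P : MvPolynomial (Fin 2) ℂ) (p : ℕ) :
    wdz^[p] (evalBi P) = evalBi ((pderiv (0 : Fin 2))^[p] P) := by
  induction p with
  | zero => rfl
  | succ n ih =>
    rw [Function.iterate_succ_apply', Function.iterate_succ_apply', ih]
    funext z; exact wdz_evalBi _ z

open MvPolynomial in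
lemma wdzbar_iter_evalBi (P : MvPolynomial (Fin 2) ℂ) (q : ℕ) :
    wdzbar^[q] (evalBi P) = evalBi ((pderiv (1 : Fin 2))^[q] P) := by
  induction q with
  | zero => rfl
  | succ n ih =>
    rw [Function.iterate_succ_apply', Function.iterate_succ_apply', ih]
    funext z; exact wdzbar_evalBi _ z

open MvPolynomial in
lemma continuous_evalBi (P : MvPolynomial (Fin 2) ℂ) : Continuous (evalBi P) := by
  induction P using MvPolynomial.induction_on with
  | C a =>
    have : evalBi (C a) = fun _ => a := by funext w; simp [evalBi]
    rw [this]; exact continuous_const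
  | add P Q ihP ihQ =>
    have : evalBi (P + Q) = fun w => evalBi P w + evalBi Q w := by
      funext w; simp [evalBi]
    rw [this]; exact ihP.add ihQ
  | mul_X P i ih =>
    have hi : i = 0 ∨ i = 1 := by
      fin_cases i
      · exact Or.inl rfl
      · exact Or.inr rfl
    rcases hi with rfl | rfl
    · have : evalBi (P * X 0) = fun w => evalBi P w * w := by
        funext w; simp [evalBi]
      rw [this]; exact ih.mul continuous_id
    · have : evalBi (P * X 1) = fun w => evalBi P w * (starRingEnd ℂ) w := by
        funext w; simp [evalBi]
      rw [this]
      exact ih.mul (Complex.continuous_conj)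

open MvPolynomial in
noncomputable def scatPoly (p q : ℕ) : MvPolynomial (Fin 2) ℂ :=
  (pderiv (0 : Fin 2))^[p] ((pderiv (1 : Fin 2))^[q] ((1 - X 0 * X 1)^(p+q-1)))

open MvPolynomial in
lemma scatter_eq (p q : ℕ) : scatter p q = fun z =>
    ((-1 : ℂ) ^ p / (q * Nat.factorial (p + q - 1))) * (1 - z * (starRingEnd ℂ) z) *
      evalBi (scatPoly p q) z := by
  have hg : (fun w : ℂ => (1 - w * (starRingEnd ℂ) w) ^ (p + q - 1))
      = evalBi ((1 - X 0 * X 1)^(p+q-1)) := by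
    funext w
    simp [evalBi]
  unfold scatter
  rw [hg, wdzbar_iter_evalBi, wdz_iter_evalBi]
  rfl

lemma continuous_scatter (p q : ℕ) : Continuous (scatter p q) := by
  rw [scatter_eq]
  exact (continuous_const.mul ((continuous_const.sub
    (continuous_id.mul Complex.continuous_conj)))).mul (continuous_evalBi _)

/-- The open unit disk in ℂ. -/
def unitDisk : Set ℂ := {z : ℂ | ‖z‖ < 1}

/-- The measure dxdy/(1-x²-y²) on the unit disk. -/
noncomputable def diskMeasure : Measure ℂ :=
  (volume.restrict unitDisk).withDensity fun z => ENNReal.ofReal (1 - Complex.normSq z)⁻¹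

lemma unitDisk_eq_ball : unitDisk = Metric.ball (0 : ℂ) 1 := by
  ext z; simp [unitDisk, Metric.mem_ball, Complex.dist_eq]

lemma measurableSet_unitDisk : MeasurableSet unitDisk :=
  (isOpen_lt continuous_norm continuous_const).measurableSet

lemma measurable_diskDensity :
    Measurable fun z : ℂ => ENNReal.ofReal (1 - Complex.normSq z)⁻¹ :=
  ((continuous_const.sub Complex.continuous_normSq).measurable.inv).ennreal_ofReal

lemma rot_volume_preserving (a : Circle) :
    MeasurePreserving (fun z : ℂ => (a : ℂ) * z) volume volume := by
  have h := (rotation a).measurePreserving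
  have he : ⇑(rotation a) = fun z : ℂ => (a : ℂ) * z := funext (rotation_apply a)
  rwa [he] at h

lemma rot_preimage_unitDisk (a : Circle) :
    (fun z : ℂ => (a : ℂ) * z) ⁻¹' unitDisk = unitDisk := by
  ext z
  simp [unitDisk, map_mul, Circle.norm_coe]

lemma rot_diskMeasure_preserving (a : Circle) :
    MeasurePreserving (fun z : ℂ => (a : ℂ) * z) diskMeasure diskMeasure := by
  have h0 := rot_volume_preserving a
  have hres : MeasurePreserving (fun z : ℂ => (a : ℂ) * z)
      (volume.restrict unitDisk) (volume.restrict unitDisk) := by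
    have := h0.restrict_preimage (s := unitDisk) measurableSet_unitDisk
    rwa [rot_preimage_unitDisk] at this
  refine ⟨h0.measurable, ?_⟩
  apply Measure.ext
  intro s hs
  rw [Measure.map_apply h0.measurable hs]
  show ((volume.restrict unitDisk).withDensity _) _ = ((volume.restrict unitDisk).withDensity _) _
  rw [withDensity_apply _ (h0.measurable hs), withDensity_apply _ hs]
  have hdrot : ∀ z : ℂ, ENNReal.ofReal (1 - Complex.normSq ((a:ℂ) * z))⁻¹
      = ENNReal.ofReal (1 - Complex.normSq z)⁻¹ := by
    intro z
    have : Complex.normSq ((a:ℂ) * z) = Complex.normSq z := by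
      simp [map_mul, Complex.normSq_eq_norm_sq, Circle.norm_coe]
    rw [this]
  calc ∫⁻ z in (fun z : ℂ => (a:ℂ)*z) ⁻¹' s, ENNReal.ofReal (1 - Complex.normSq z)⁻¹ ∂(volume.restrict unitDisk)
      = ∫⁻ z in (fun z : ℂ => (a:ℂ)*z) ⁻¹' s,
          ENNReal.ofReal (1 - Complex.normSq ((a:ℂ) * z))⁻¹ ∂(volume.restrict unitDisk) := by
        exact lintegral_congr fun z => (hdrot z).symm
    _ = ∫⁻ z in s, ENNReal.ofReal (1 - Complex.normSq z)⁻¹ ∂(volume.restrict unitDisk) :=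
        hres.setLIntegral_comp_preimage hs measurable_diskDensity

lemma rot_measurableEmbedding (a : Circle) :
    MeasurableEmbedding (fun z : ℂ => (a : ℂ) * z) := by
  have h := (mulCLE (Units.mk0 (a : ℂ) (Circle.coe_ne_zero a))).toHomeomorph.measurableEmbedding
  have he : ⇑(mulCLE (Units.mk0 (a : ℂ) (Circle.coe_ne_zero a))).toHomeomorph
      = fun z : ℂ => (a : ℂ) * z := by
    funext z
    simpa using mulCLE_apply (Units.mk0 (a : ℂ) (Circle.coe_ne_zero a)) z
  rwa [he] at h

lemma scatter_bound (p q : ℕ) :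
    ∃ C : ℝ, 0 ≤ C ∧ ∀ z ∈ unitDisk, ‖scatter p q z‖ ≤ C * (1 - Complex.normSq z) := by
  set c := ((-1 : ℂ) ^ p / (q * Nat.factorial (p + q - 1))) with hc
  have hcont : ContinuousOn (fun z => c * evalBi (scatPoly p q) z) (Metric.closedBall (0:ℂ) 1) :=
    (continuous_const.mul (continuous_evalBi _)).continuousOn
  obtain ⟨C, hC⟩ := (isCompact_closedBall (0:ℂ) 1).exists_bound_of_continuousOn hcont
  refine ⟨max C 0, le_max_right _ _, ?_⟩
  intro z hz
  have hz1 : ‖z‖ < 1 := hz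
  have hzb : z ∈ Metric.closedBall (0:ℂ) 1 := by
    simp only [Metric.mem_closedBall, Complex.dist_eq, sub_zero]
    exact le_of_lt hz1
  have hs0 : 0 ≤ Complex.normSq z := Complex.normSq_nonneg z
  have hs1 : Complex.normSq z < 1 := by
    rw [Complex.normSq_eq_norm_sq]
    nlinarith [norm_nonneg z]
  have h1 : (1 : ℂ) - z * (starRingEnd ℂ) z = ((1 - Complex.normSq z : ℝ) : ℂ) := by
    rw [Complex.mul_conj]; push_cast; ring
  have hsc : scatter p q z = c * evalBi (scatPoly p q) z * ((1 - Complex.normSq z : ℝ) : ℂ) := by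
    rw [scatter_eq]
    simp only []
    rw [h1, ← hc]; ring
  rw [hsc, norm_mul]
  have h2 : ‖((1 - Complex.normSq z : ℝ) : ℂ)‖ = 1 - Complex.normSq z := by
    rw [Complex.norm_real]
    exact abs_of_nonneg (by linarith)
  rw [h2]
  apply mul_le_mul (le_trans (hC z hzb) (le_max_left _ _)) le_rfl (by linarith) (le_max_right _ _)

/-- If q - p ≠ q' - p', then φ^{(p,q)} ⟂ φ^{(p',q')} in L²(D, dxdy/(1-x²-y²)),
    the integral being absolutely convergent. -/
theorem scatter_orthogonal_of_ne_diff (p q p' q' : ℕ)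
    (hp : 1 ≤ p) (hq : 1 ≤ q) (hp' : 1 ≤ p') (hq' : 1 ≤ q')
    (h : (q : ℤ) - p ≠ (q' : ℤ) - p') :
    Integrable (fun z => scatter p q z * (starRingEnd ℂ) (scatter p' q' z)) diskMeasure ∧
      ∫ z, scatter p q z * (starRingEnd ℂ) (scatter p' q' z) ∂diskMeasure = 0 := by
  set F : ℂ → ℂ := fun z => scatter p q z * (starRingEnd ℂ) (scatter p' q' z) with hF
  have hcontF : Continuous F :=
    (continuous_scatter p q).mul (Complex.continuous_conj.comp (continuous_scatter p' q'))
  obtain ⟨C1, hC1, hB1⟩ := scatter_bound p q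
  obtain ⟨C2, hC2, hB2⟩ := scatter_bound p' q'
  have hInt : Integrable F diskMeasure := by
    refine ⟨hcontF.aestronglyMeasurable, ?_⟩
    rw [hasFiniteIntegral_iff_norm]
    rw [show diskMeasure = (volume.restrict unitDisk).withDensity
      (fun z => ENNReal.ofReal (1 - Complex.normSq z)⁻¹) from rfl]
    rw [lintegral_withDensity_eq_lintegral_mul _ measurable_diskDensity
      (hcontF.norm.measurable).ennreal_ofReal]
    have key : ∀ z ∈ unitDisk,
        ((fun z => ENNReal.ofReal (1 - Complex.normSq z)⁻¹) *
          fun z => ENNReal.ofReal ‖F z‖) z ≤ ENNReal.ofReal (C1 * C2) := by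
      intro z hz
      simp only [Pi.mul_apply]
      have hs0 : 0 ≤ Complex.normSq z := Complex.normSq_nonneg z
      have hs1 : Complex.normSq z < 1 := by
        have hz1 : ‖z‖ < 1 := hz
        rw [Complex.normSq_eq_norm_sq]; nlinarith [norm_nonneg z]
      have hpos : 0 < 1 - Complex.normSq z := by linarith
      have hFn : ‖F z‖ ≤ (C1 * (1 - Complex.normSq z)) * (C2 * (1 - Complex.normSq z)) := by
        rw [hF]
        simp only [norm_mul]
        have hconjn : ‖(starRingEnd ℂ) (scatter p' q' z)‖ = ‖scatter p' q' z‖ :=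
          RCLike.norm_conj _
        rw [hconjn]
        exact mul_le_mul (hB1 z hz) (hB2 z hz) (norm_nonneg _)
          (by positivity)
      rw [← ENNReal.ofReal_mul (by positivity)]
      apply ENNReal.ofReal_le_ofReal
      have step : (1 - Complex.normSq z)⁻¹ * ‖F z‖
          ≤ (1 - Complex.normSq z)⁻¹ * ((C1 * (1 - Complex.normSq z)) * (C2 * (1 - Complex.normSq z))) :=
        mul_le_mul_of_nonneg_left hFn (by positivity)
      have heq : (1 - Complex.normSq z)⁻¹ * ((C1 * (1 - Complex.normSq z)) * (C2 * (1 - Complex.normSq z)))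
          = C1 * C2 * (1 - Complex.normSq z) := by
        field_simp
      rw [heq] at step
      calc (1 - Complex.normSq z)⁻¹ * ‖F z‖ ≤ C1 * C2 * (1 - Complex.normSq z) := step
        _ ≤ C1 * C2 := by nlinarith [mul_nonneg hC1 hC2]
    calc ∫⁻ z in unitDisk, ((fun z => ENNReal.ofReal (1 - Complex.normSq z)⁻¹) *
          fun z => ENNReal.ofReal ‖F z‖) z ∂volume
        ≤ ∫⁻ _ in unitDisk, ENNReal.ofReal (C1 * C2) ∂volume :=
          setLIntegral_mono measurable_const key
      _ = ENNReal.ofReal (C1 * C2) * volume unitDisk := setLIntegral_const _ _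
      _ < ⊤ := by
          apply ENNReal.mul_lt_top ENNReal.ofReal_lt_top
          rw [unitDisk_eq_ball]
          exact measure_ball_lt_top
  refine ⟨hInt, ?_⟩
  -- rotation argument
  set k : ℤ := ((q : ℤ) - p) - ((q' : ℤ) - p') with hk
  have hk0 : k ≠ 0 := sub_ne_zero.mpr h
  set t : ℝ := Real.pi / (k : ℝ) with ht
  set a : Circle := Circle.exp t with haDef
  have haC : (a : ℂ) = Complex.exp ((t : ℂ) * Complex.I) := Circle.coe_exp t
  have hau : (a : ℂ) * (starRingEnd ℂ) (a : ℂ) = 1 := by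
    rw [Complex.mul_conj]
    norm_cast
    simp [Complex.normSq_eq_norm_sq, Circle.norm_coe]
  set au : ℂˣ := Units.mk0 (a : ℂ) (Circle.coe_ne_zero a) with hauDef
  have hval : (au : ℂ) = (a : ℂ) := rfl
  have hFrot : ∀ z, F ((a : ℂ) * z)
      = (((starRingEnd ℂ) (a : ℂ)) ^ (p + q') * (a : ℂ) ^ (q + p')) * F z := by
    intro z
    rw [hF]
    simp only []
    have h1 := scatter_rot p q au (by rw [hval]; exact hau) z
    have h2 := scatter_rot p' q' au (by rw [hval]; exact hau) z
    rw [hval] at h1 h2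
    rw [h1, h2]
    simp only [map_mul, map_pow, Complex.conj_conj]
    ring
  have hint := (rot_diskMeasure_preserving a).integral_comp (rot_measurableEmbedding a) F
  have hrot : ∫ z, F ((a : ℂ) * z) ∂diskMeasure = ∫ z, F z ∂diskMeasure := hint
  have hconst : ∫ z, F ((a : ℂ) * z) ∂diskMeasure
      = (((starRingEnd ℂ) (a : ℂ)) ^ (p + q') * (a : ℂ) ^ (q + p')) * ∫ z, F z ∂diskMeasure := by
    rw [show (fun z => F ((a:ℂ) * z)) = fun z =>
      (((starRingEnd ℂ) (a : ℂ)) ^ (p + q') * (a : ℂ) ^ (q + p')) * F z from funext hFrot]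
    exact integral_const_mul _ _
  have hcneg : ((starRingEnd ℂ) (a : ℂ)) ^ (p + q') * (a : ℂ) ^ (q + p') = -1 := by
    have hconjA : (starRingEnd ℂ) (a : ℂ) = Complex.exp (-((t : ℂ) * Complex.I)) := by
      rw [haC, ← Complex.exp_conj]
      congr 1
      simp [Complex.conj_ofReal, Complex.conj_I]
    rw [hconjA, haC, ← Complex.exp_nat_mul, ← Complex.exp_nat_mul, ← Complex.exp_add]
    have harg : (↑(p + q') : ℂ) * -((t:ℂ) * Complex.I) + (↑(q + p') : ℂ) * ((t:ℂ) * Complex.I)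
        = (k : ℂ) * ((t:ℂ) * Complex.I) := by
      push_cast [hk]
      ring
    rw [harg]
    have ht' : (k : ℂ) * ((t:ℂ) * Complex.I) = (Real.pi : ℂ) * Complex.I := by
      rw [ht]
      have hkR : ((k : ℝ) : ℂ) = (k : ℂ) := by push_cast; rfl
      have hkne : (k : ℂ) ≠ 0 := Int.cast_ne_zero.mpr hk0
      push_cast
      field_simp
    rw [ht']
    exact Complex.exp_pi_mul_I
  rw [hcneg] at hconst
  rw [hconst] at hrot
  have : ∫ z, F z ∂diskMeasure + ∫ z, F z ∂diskMeasure = 0 := by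
    linear_combination -hrot
  exact add_self_eq_zero.mp this
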